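/- If a binary word f has a 2-tilde-error overlap with error block 101 aligned against 010 (type SR or RS with adjacent errors), i.e., f = w2·101·w3·w4 = w1·w2·010·w3 with |w1| = r, then f is tilde-non-isometric; in particular, α̃ = w1·w2·011·w3·w4 and β̃ = w1·w2·100·w3·w4 form a pair of tilde-witnesses for f. -/

import Mathlib

/-- Edit operations on binary words: `R i` flips the bit at position `i`,
`S i` swaps the (distinct) bits at positions `i` and `i+1`. Positions are 0-based. -/
inductive TOp where
  | R (i : ℕ)
  | S (i : ℕ)
deriving DecidableEq

namespace TOp

def apply : TOp → List Bool → List Bool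
  | R i, w => w.set i (!(w.getD i false))
  | S i, w => (w.set i (w.getD (i+1) false)).set (i+1) (w.getD i false)

def valid : TOp → List Bool → Prop
  | R i, w => i < w.length
  | S i, w => i + 1 < w.length ∧ w.getD i false ≠ w.getD (i+1) false

/-- The set of positions modified by an operation. -/
def positions : TOp → Finset ℕ
  | R i => {i}
  | S i => {i, i+1}

/-- The (leftmost) position of an operation. -/
def pos : TOp → ℕ
  | R i => i
  | S i => i

def isR : TOp → Prop
  | R _ => True
  | S _ => False

def isS : TOp → Prop
  | R _ => False
  | S _ => True

end TOp

/-- All operations of a sequence are valid when applied successively starting from `w`. -/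
def validSeq : List TOp → List Bool → Prop
  | [], _ => True
  | o :: os, w => o.valid w ∧ validSeq os (o.apply w)

def applySeq : List TOp → List Bool → List Bool
  | [], w => w
  | o :: os, w => applySeq os (o.apply w)

/-- `ops` is a tilde-transformation from `u` to `v`. -/
def Transforms (ops : List TOp) (u v : List Bool) : Prop :=
  validSeq ops u ∧ applySeq ops u = v

/-- The swap-mismatch (tilde) distance between two words. -/
noncomputable def tdist (u v : List Bool) : ℕ :=
  sInf { n | ∃ ops : List TOp, ops.length = n ∧ Transforms ops u v }

/-- Each position of the word is modified at most once along the sequence. -/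
def eachPosOnce (ops : List TOp) : Prop :=
  ops.Pairwise fun o o' => Disjoint o.positions o'.positions

/-- A minimal tilde-transformation: length `tdist u v`, each position changed at most once. -/
def MinimalTransf (ops : List TOp) (u v : List Bool) : Prop :=
  Transforms ops u v ∧ ops.length = tdist u v ∧ eachPosOnce ops

/-- The list of all words `w_0 = u, w_1, …, w_h` visited by the transformation. -/
def trajectory (ops : List TOp) (u : List Bool) : List (List Bool) :=
  List.scanl (fun w o => o.apply w) u ops

/-- `w` avoids `f` as a factor. -/
def FFree (f w : List Bool) : Prop := ¬ f <:+: w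

/-- All words along the transformation are `f`-free. -/
def FreeTransf (f : List Bool) (ops : List TOp) (u : List Bool) : Prop :=
  ∀ w ∈ trajectory ops u, FFree f w

/-- `f` is tilde-isometric. -/
def TildeIsometric (f : List Bool) : Prop :=
  ∀ u v : List Bool, u.length = v.length → f.length < u.length →
    FFree f u → FFree f v →
      ∃ ops : List TOp, MinimalTransf ops u v ∧ FreeTransf f ops u

/-- `(u,v)` is a pair of tilde-witnesses for `f`. -/
def Witnesses (f u v : List Bool) : Prop :=
  u.length = v.length ∧ FFree f u ∧ FFree f v ∧ 2 ≤ tdist u v ∧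
    ∀ ops : List TOp, MinimalTransf ops u v → ¬ FreeTransf f ops u

/-- Hamming distance between equal-length words (number of mismatch positions). -/
def hdist (u v : List Bool) : ℕ := ((u.zip v).filter fun p => p.1 != p.2).length


section Aux


private theorem getD_append_add (P l : List Bool) (i : ℕ) :
    (P ++ l).getD (P.length + i) false = l.getD i false := by
  rw [List.getD_append_right _ _ _ _ (by omega)]
  congr 1
  omega

private theorem gp0 (P T : List Bool) (x y z : Bool) :
    (P ++ ([x, y, z] ++ T)).getD P.length false = x := by
  have := getD_append_add P ([x,y,z] ++ T) 0
  simpa using this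

private theorem gp1 (P T : List Bool) (x y z : Bool) :
    (P ++ ([x, y, z] ++ T)).getD (P.length + 1) false = y := by
  have := getD_append_add P ([x,y,z] ++ T) 1
  simpa using this

private theorem gp2 (P T : List Bool) (x y z : Bool) :
    (P ++ ([x, y, z] ++ T)).getD (P.length + 2) false = z := by
  have := getD_append_add P ([x,y,z] ++ T) 2
  simpa using this

private theorem blocks_congr (P T : List Bool) (x y z x' y' z' : Bool) (i : ℕ)
    (hx : i = P.length → x = x') (hy : i = P.length + 1 → y = y')
    (hz : i = P.length + 2 → z = z') :
    (P ++ ([x, y, z] ++ T)).getD i false = (P ++ ([x', y', z'] ++ T)).getD i false := by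
  rcases Nat.lt_or_ge i P.length with h | h
  · rw [List.getD_append _ _ _ _ h, List.getD_append _ _ _ _ h]
  · obtain ⟨j, rfl⟩ : ∃ j, i = P.length + j := ⟨i - P.length, by omega⟩
    rw [getD_append_add, getD_append_add]
    match j with
    | 0 => simpa using hx rfl
    | 1 => simpa using hy (by omega)
    | 2 => simpa using hz (by omega)
    | (m+3) => simp

private theorem getD_set_self (l : List Bool) (i : ℕ) (x : Bool) (h : i < l.length) :
    (l.set i x).getD i false = x := by
  rw [List.getD_eq_getElem?_getD, List.getElem?_set_eq_of_lt _ h]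
  rfl
private theorem getD_set_ne (l : List Bool) (i j : ℕ) (x : Bool) (h : j ≠ i) :
    (l.set i x).getD j false = l.getD j false := by
  rw [List.getD_eq_getElem?_getD, List.getElem?_set_ne (by omega), ← List.getD_eq_getElem?_getD]
private theorem set_append_add (P l : List Bool) (i : ℕ) (a : Bool) :
    (P ++ l).set (P.length + i) a = P ++ l.set i a := by
  induction P with
  | nil => simp
  | cons b P ih => simp [List.set, Nat.add_comm, Nat.add_assoc]
private theorem apply_length (o : TOp) (w : List Bool) : (o.apply w).length = w.length := by
  cases o <;> simp [TOp.apply]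

private theorem apply_not_mem (o : TOp) (w : List Bool) (q : ℕ) (h : q ∉ o.positions) :
    (o.apply w).getD q false = w.getD q false := by
  cases o with
  | R i =>
    simp [TOp.positions] at h
    simp only [TOp.apply]
    rw [getD_set_ne _ _ _ _ h]
  | S i =>
    simp [TOp.positions] at h
    simp only [TOp.apply]
    rw [getD_set_ne _ _ _ _ h.2, getD_set_ne _ _ _ _ h.1]

private theorem apply_mem (o : TOp) (w : List Bool) (q : ℕ) (hv : o.valid w)
    (h : q ∈ o.positions) :
    (o.apply w).getD q false ≠ w.getD q false := by
  cases o with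
  | R i =>
    simp [TOp.positions] at h
    subst h
    simp only [TOp.apply, TOp.valid] at hv ⊢
    rw [getD_set_self _ _ _ hv]
    simp
  | S i =>
    obtain ⟨hv1, hv2⟩ := hv
    simp [TOp.positions] at h
    rcases h with h | h
    · subst h
      simp only [TOp.apply]
      rw [getD_set_ne _ _ _ _ (by omega), getD_set_self _ _ _ (by omega)]
      exact fun hh => hv2 hh.symm
    · subst h
      simp only [TOp.apply]
      rw [getD_set_self _ _ _ (by simpa using hv1)]
      exact fun hh => hv2 hh


private theorem chainCycle (G : ℕ → Bool) (B : ℕ → Prop) (per M : ℕ) (hM : M ≤ per)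
    (hstep : ∀ i, ¬ B i → G (i+1) = G i)
    (huniq : ∀ i j, B i → B j → i % per = j % per)
    (hper : G per = G 0) : G M = G 0 := by
  by_cases hex : ∃ i, i < M ∧ B i
  · obtain ⟨i0, hi0M, hB0⟩ := hex
    have key : ∀ t, M + t ≤ per → G (M + t) = G M := by
      intro t
      induction t with
      | zero => intro _; rfl
      | succ t ih =>
        intro ht
        have h1 : ¬ B (M + t) := by
          intro hB
          have := huniq i0 (M+t) hB0 hB
          have h2 : i0 % per = i0 := Nat.mod_eq_of_lt (by omega)
          have h3 : (M+t) % per = M + t := Nat.mod_eq_of_lt (by omega)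
          omega
        calc G (M + (t+1)) = G (M + t + 1) := by ring_nf
        _ = G (M+t) := hstep (M+t) h1
        _ = G M := ih (by omega)
    have := key (per - M) (by omega)
    rw [show M + (per - M) = per by omega] at this
    rw [← this, hper]
  · push_neg at hex
    have key : ∀ t, t ≤ M → G t = G 0 := by
      intro t
      induction t with
      | zero => intro _; rfl
      | succ t ih =>
        intro ht
        rw [hstep t (hex t (by omega)), ih (by omega)]
    exact key M le_rfl

private theorem rotation_contra (F : ℕ → Bool) (n r a b v x : ℕ)
    (ha : 0 < a) (hb : 0 < b) (hab : a + b = r) (hxr : x + r < n)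
    (HA : ∀ j, j + a < n → j + a ≠ v → F j = F (j + a))
    (HB : ∀ j, n ≤ j + a → j < n → F j = F (j - b))
    (hx0 : ∀ m, x + m * a ≠ v) (hx1 : ∀ m, x + r + m * a ≠ v)
    (hne : F x ≠ F (x + r)) : False := by
  have har : a < r := by omega
  have hrn : r < n := by omega
  -- climb
  have climb : ∀ (fuel x' : ℕ), n ≤ x' + r + fuel → x' < n → (∀ m, x' + m * a ≠ v) →
      ∃ y m0, n ≤ y + r ∧ y < n ∧ F y = F x' ∧ y = x' + m0 * a := by
    intro fuel
    induction fuel with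
    | zero =>
      intro x' hf hx' _
      exact ⟨x', 0, by omega, hx', rfl, by omega⟩
    | succ fuel ih =>
      intro x' hf hx' hm
      by_cases hwin : n ≤ x' + r
      · exact ⟨x', 0, hwin, hx', rfl, by omega⟩
      · have h1 : x' + a < n := by omega
        have h2 : x' + a ≠ v := by have := hm 1; omega
        have hs := HA x' h1 h2
        obtain ⟨y, m0, w1, w2, w3, w4⟩ := ih (x' + a) (by omega) h1 (by
          intro m
          have := hm (m+1)
          have : x' + (m+1) * a = x' + a + m * a := by ring
          omega)
        exact ⟨y, m0 + 1, w1, w2, by rw [w3, hs], by rw [w4]; ring⟩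
  obtain ⟨y0, m0, hy0a, hy0b, hFy0, hy0e⟩ := climb n x (by omega) (by omega) hx0
  obtain ⟨y1, m1, hy1a, hy1b, hFy1, hy1e⟩ := climb n (x + r) (by omega) (by omega) hx1
  -- setup arithmetic
  set d := Nat.gcd a r with hd_def
  have hdpos : 0 < d := Nat.gcd_pos_of_pos_left _ ha
  set a' := a / d with ha'_def
  set r' := r / d with hr'_def
  have hda : d * a' = a := Nat.mul_div_cancel' (Nat.gcd_dvd_left a r)
  have hdr : d * r' = r := Nat.mul_div_cancel' (Nat.gcd_dvd_right a r)
  have hco : Nat.Coprime a' r' := Nat.coprime_div_gcd_div_gcd hdpos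
  have hr'pos : 0 < r' := Nat.div_pos (Nat.le_of_dvd (by omega) (Nat.gcd_dvd_right a r)) hdpos
  set nr := n - r with hnr_def
  have hnr : nr + r = n := by omega
  set C0 := y0 - nr with hC0_def
  have hC0 : C0 + nr = y0 := by omega
  have hC0lt : C0 < r := by omega
  set C1 := y1 - nr with hC1_def
  have hC1 : C1 + nr = y1 := by omega
  have hC1lt : C1 < r := by omega
  set g : ℕ → ℕ := fun i => nr + (C0 + i * a) % r with hg_def
  have hgwin : ∀ i, nr ≤ g i ∧ g i < n := by
    intro i
    have := Nat.mod_lt (C0 + i * a) (show 0 < r by omega)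
    constructor <;> simp only [hg_def] <;> omega
  have hg0 : g 0 = y0 := by
    simp only [hg_def, Nat.zero_mul, Nat.add_zero]
    rw [Nat.mod_eq_of_lt hC0lt]; omega
  -- step lemma
  have hgstep : ∀ i, g (i+1) ≠ v → F (g (i+1)) = F (g i) := by
    intro i hv
    have hmodsucc : (C0 + (i+1) * a) % r = ((C0 + i * a) % r + a) % r := by
      conv_lhs => rw [show C0 + (i+1)*a = (C0 + i*a) + a by ring]
      exact (Nat.mod_add_mod _ _ _).symm
    set e := (C0 + i * a) % r with he_def
    have helt : e < r := Nat.mod_lt _ (by omega)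
    by_cases hcase : e + a < r
    · have : g (i+1) = g i + a := by
        simp only [hg_def, ← he_def, hmodsucc, Nat.mod_eq_of_lt hcase]; omega
      rw [this] at hv ⊢
      exact (HA (g i) (by have := hgwin i; simp only [hg_def, ← he_def]; omega) hv).symm
    · have hmod2 : (e + a) % r = e + a - r := by
        rw [Nat.mod_eq_sub_mod (by omega), Nat.mod_eq_of_lt (by omega)]
      have hgi : g i = nr + e := by simp only [hg_def, ← he_def]
      have : g (i+1) = g i - b := by
        simp only [hg_def, ← he_def, hmodsucc, hmod2]; omega
      rw [this]
      exact (HB (g i) (by omega) (by have := hgwin i; omega)).symm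
  have hgper : g r' = g 0 := by
    have h1 : (C0 + r' * a) % r = (C0 + 0 * a) % r := by
      rw [show r' * a = r * a' by rw [← hda, ← hdr]; ring, Nat.add_mul_mod_self_left,
        Nat.zero_mul, Nat.add_zero]
    simp only [hg_def, h1]
  -- find M
  have hdc : (d:ℤ) ∣ ((y1:ℤ) - y0) := by
    have h1 : (y1:ℤ) - y0 = (r:ℤ) + ((m1:ℤ) - m0) * a := by
      have e0 : (y0:ℤ) = (x:ℤ) + (m0:ℤ) * (a:ℤ) := by exact_mod_cast hy0e
      have e1 : (y1:ℤ) = (x:ℤ) + (r:ℤ) + (m1:ℤ) * (a:ℤ) := by exact_mod_cast hy1e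
      rw [e0, e1]; ring
    rw [h1]
    have h2 : (d:ℤ) ∣ (r:ℤ) := ⟨r', by exact_mod_cast hdr.symm⟩
    have h3 : (d:ℤ) ∣ (a:ℤ) := ⟨a', by exact_mod_cast hda.symm⟩
    exact dvd_add h2 (Dvd.dvd.mul_left h3 _)
  set c : ℤ := (y1:ℤ) - y0 with hc_def
  set c' : ℤ := c / d with hc'_def
  have hcd : (d:ℤ) * c' = c := Int.mul_ediv_cancel' hdc
  have hgcd1 : Int.gcd (a':ℤ) (r':ℤ) = 1 := by
    rw [Int.gcd_natCast_natCast]; exact hco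
  have hbez : (1:ℤ) = a' * Int.gcdA a' r' + r' * Int.gcdB a' r' := by
    have := Int.gcd_eq_gcd_ab (a':ℤ) (r':ℤ)
    rw [hgcd1] at this; exact_mod_cast this
  set u := Int.gcdA (a':ℤ) (r':ℤ) with hu_def
  have hr'z : (r':ℤ) ≠ 0 := by exact_mod_cast hr'pos.ne'
  set Mz : ℤ := (c' * u) % (r':ℤ) with hMz_def
  have hMz0 : 0 ≤ Mz := Int.emod_nonneg _ hr'z
  have hMzlt : Mz < (r':ℤ) := Int.emod_lt_of_pos _ (by exact_mod_cast hr'pos)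
  set M := Mz.toNat with hM_def
  have hMcast : (M:ℤ) = Mz := Int.toNat_of_nonneg hMz0
  have hMlt : M < r' := by omega
  -- key divisibility
  have KEY : (r:ℤ) ∣ ((M:ℤ) * a - c) := by
    have h1 : (r':ℤ) ∣ (Mz * a' - c') := by
      have h2 : Mz ≡ c' * u [ZMOD (r':ℤ)] := by
        show Mz % _ = _ % _
        rw [hMz_def]
        exact Int.emod_emod_of_dvd _ dvd_rfl
      have h3 : Mz * a' ≡ c' * u * a' [ZMOD (r':ℤ)] := h2.mul_right _
      have h4 : c' * u * a' ≡ c' [ZMOD (r':ℤ)] := by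
        refine Int.ModEq.symm (Int.modEq_iff_dvd.mpr ?_)
        exact ⟨-(c' * Int.gcdB a' r'), by linear_combination (-c') * hbez⟩
      have h5 := (h3.trans h4).dvd
      have h6 : c' - Mz * a' = -(Mz * a' - c') := by ring
      rw [h6] at h5
      exact dvd_neg.mp h5
    obtain ⟨t, ht⟩ := h1
    refine ⟨t, ?_⟩
    have hda' : (d:ℤ) * a' = a := by exact_mod_cast hda
    have hdr' : (d:ℤ) * r' = r := by exact_mod_cast hdr
    calc (M:ℤ) * a - c = (Mz * a' - c') * d := by rw [hMcast, ← hda', ← hcd]; ring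
    _ = (r' * t) * d := by rw [ht]
    _ = r * t := by rw [← hdr']; ring
  -- g M = y1
  have hgM : g M = y1 := by
    obtain ⟨t, ht⟩ := KEY
    -- (M:ℤ) * a = c + r * t
    have ht' : (M:ℤ) * a = c + r * t := by linarith
    have htnn : 0 ≤ t := by
      by_contra hneg
      push_neg at hneg
      have h1 : (C0:ℤ) + M * a = C1 + r * t := by
        have hcc : (C1:ℤ) = C0 + c := by
          simp only [hc_def]
          have : (C0:ℤ) + nr = y0 := by exact_mod_cast hC0
          have : (C1:ℤ) + nr = y1 := by exact_mod_cast hC1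
          omega
        rw [ht', hcc]; ring
      have h2 : (0:ℤ) ≤ (C0:ℤ) + M * a := by positivity
      have h3 : (C1:ℤ) + r * t < r + r * t := by
        have : (C1:ℤ) < r := by exact_mod_cast hC1lt
        linarith
      have h4 : (r:ℤ) + r * t ≤ 0 := by
        have : (r:ℤ) * t ≤ r * (-1) := by
          apply mul_le_mul_of_nonneg_left _ (by positivity)
          omega
        linarith
      linarith
    set tn := t.toNat with htn_def
    have htn : (tn:ℤ) = t := Int.toNat_of_nonneg htnn
    have hnat : C0 + M * a = C1 + r * tn := by
      have h1 : ((C0 + M * a : ℕ) : ℤ) = ((C1 + r * tn : ℕ) : ℤ) := by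
        push_cast
        rw [ht', htn]
        have hcc : (C1:ℤ) = C0 + c := by
          simp only [hc_def]
          have e1 : (C0:ℤ) + nr = y0 := by exact_mod_cast hC0
          have e2 : (C1:ℤ) + nr = y1 := by exact_mod_cast hC1
          omega
        rw [hcc]; ring
      exact_mod_cast h1
    have : (C0 + M * a) % r = C1 := by
      rw [hnat, Nat.add_mul_mod_self_left, Nat.mod_eq_of_lt hC1lt]
    simp only [hg_def, this]
    omega
  -- uniqueness of bad steps
  have huniq : ∀ i j : ℕ, g (i+1) = v → g (j+1) = v → i % r' = j % r' := by
    intro i j hi hj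
    have hgg : (C0 + (i+1) * a) % r = (C0 + (j+1) * a) % r := by
      have : nr + (C0 + (i+1) * a) % r = nr + (C0 + (j+1) * a) % r := by
        show g (i+1) = g (j+1)
        rw [hi, hj]
      omega
    have hme : (i+1) * a ≡ (j+1) * a [MOD r] := Nat.ModEq.add_left_cancel' C0 hgg
    have hdvd : (r:ℤ) ∣ ((j:ℤ)+1) * a - ((i:ℤ)+1) * a := by
      have := hme.dvd
      push_cast at this ⊢
      convert this using 1
    have hdvd2 : (r':ℤ) ∣ ((j:ℤ) - i) * a' := by
      have hda' : (d:ℤ) * a' = a := by exact_mod_cast hda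
      have hdr' : (d:ℤ) * r' = r := by exact_mod_cast hdr
      have h1 : ((j:ℤ)+1) * a - ((i:ℤ)+1) * a = d * (((j:ℤ) - i) * a') := by
        rw [← hda']; ring
      rw [h1, ← hdr'] at hdvd
      exact (mul_dvd_mul_iff_left (show (d:ℤ) ≠ 0 by exact_mod_cast hdpos.ne')).mp hdvd
    have hcop : IsCoprime (r':ℤ) (a':ℤ) := by
      rw [Int.isCoprime_iff_gcd_eq_one, Int.gcd_natCast_natCast]
      exact hco.symm
    have hdvd3 : (r':ℤ) ∣ ((j:ℤ) - i) := hcop.dvd_of_dvd_mul_right hdvd2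
    have : (i:ℤ) % r' = (j:ℤ) % r' := Int.modEq_iff_dvd.mpr hdvd3
    have h2 : ((i % r' : ℕ) : ℤ) = ((j % r' : ℕ) : ℤ) := by
      push_cast
      omega
    exact_mod_cast h2
  -- conclude
  have final := chainCycle (fun i => F (g i)) (fun i => g (i+1) = v) r' M hMlt.le
    (fun i hB => hgstep i hB) huniq (by show F (g r') = F (g 0); rw [hgper])
  rw [hgM, hg0] at final
  rw [hFy1, hFy0] at final
  exact hne final.symm
private theorem alpha_core (F : ℕ → Bool) (r l2 l3 k p n : ℕ)
    (hp : p = r + l2) (hn : n = r + l2 + 3 + l3) (hk0 : 0 < k) (hkr : k < r)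
    (HA : ∀ j, j + k < n → j + k ≠ p + 2 → F j = F (j + k))
    (HB : ∀ j, n ≤ j + k → j < n → F j = F (j - (r - k)))
    (O2 : F (p + 2 - k) = true)
    (b1 : F l2 = true) (b2 : F (l2+1) = false)
    (b4 : F p = false) (b5 : F (p+1) = true) : False := by
  rcases Nat.lt_or_ge k 3 with hk3 | hk3
  · interval_cases k
    · have := HA p (by omega) (by omega)
      rw [b4, b5] at this
      exact Bool.false_ne_true this
    · rw [show p + 2 - 2 = p by omega, b4] at O2
      exact Bool.false_ne_true O2
  · by_cases hdvd : k ∣ (r + 1)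
    · refine rotation_contra F n r k (r - k) (p+2) l2 hk0 (by omega) (by omega) (by omega)
        HA HB ?_ ?_ ?_
      · intro m hm
        have hmk : m * k = r + 2 := by omega
        have hd2 : k ∣ r + 2 := hmk ▸ dvd_mul_left k m
        have h1 : k ∣ 1 := by
          have := Nat.dvd_sub hd2 hdvd
          rwa [show r + 2 - (r+1) = 1 by omega] at this
        have := Nat.le_of_dvd one_pos h1
        omega
      · intro m hm
        have hmk : m * k = 2 := by omega
        have hd2 : k ∣ 2 := hmk ▸ dvd_mul_left k m
        have := Nat.le_of_dvd two_pos hd2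
        omega
      · rw [show l2 + r = p by omega, b1, b4]; simp
    · refine rotation_contra F n r k (r - k) (p+2) (l2+1) hk0 (by omega) (by omega) (by omega)
        HA HB ?_ ?_ ?_
      · intro m hm
        have hmk : m * k = r + 1 := by omega
        exact hdvd (hmk ▸ dvd_mul_left k m)
      · intro m hm
        have hmk : m * k = 1 := by omega
        have hd2 : k ∣ 1 := hmk ▸ dvd_mul_left k m
        have := Nat.le_of_dvd one_pos hd2
        omega
      · rw [show l2 + 1 + r = p + 1 by omega, b2, b5]; simp

private theorem beta_core (F : ℕ → Bool) (r l2 l3 k p n : ℕ)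
    (hp : p = r + l2) (hn : n = r + l2 + 3 + l3) (hk0 : 0 < k) (hkr : k < r)
    (HA : ∀ j, j + k < n → j + k ≠ p → j + k ≠ p + 1 → F j = F (j + k))
    (HQ : ∀ j, r - k ≤ j → j < n → j ≠ p + 2 - k → F j = F (j - (r - k)))
    (d1 : F (p+1-k) = false) (d2 : F (p+2-k) = false)
    (b1 : F l2 = true) (b2 : F (l2+1) = false)
    (b4 : F p = false) (b5 : F (p+1) = true) (b6 : F (p+2) = false) : False := by
  obtain ⟨s, hs⟩ : ∃ s, s = r - k := ⟨r - k, rfl⟩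
  simp only [← hs] at HQ
  have hs1 : 0 < s := by omega
  by_cases hsv1 : s = 1
  · by_cases hk1 : k = 1
    · have := HA (p+1) (by omega) (by omega) (by omega)
      rw [b5, show p + 1 + k = p + 2 by omega, b6] at this
      simp at this
    · have := HQ (p+1) (by omega) (by omega) (by omega)
      rw [b5, show p + 1 - s = p by omega, b4] at this
      simp at this
  · by_cases hsv2 : s = 2
    · have claim : ∀ m, 2 * m ≤ k → F (p+1-2*m) = true := by
        intro m
        induction m with
        | zero => intro _; simpa using b5
        | succ m ih =>
          intro hm
          have prev := ih (by omega)
          have step := HQ (p+1-2*m) (by omega) (by omega) (by omega)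
          rw [show p + 1 - 2*m - s = p + 1 - 2*(m+1) by omega] at step
          rw [← step]; exact prev
      rcases Nat.even_or_odd k with ⟨t, ht⟩ | ⟨t, ht⟩
      · have := claim t (by omega)
        rw [show p + 1 - 2*t = p + 1 - k by omega, d1] at this
        simp at this
      · have := claim t (by omega)
        rw [show p + 1 - 2*t = p + 2 - k by omega, d2] at this
        simp at this
    · -- s ≥ 3 : rotation on reversed word
      have hs3 : 3 ≤ s := by omega
      set G : ℕ → Bool := fun i => F (n - 1 - i) with hG
      have HA' : ∀ i, i + s < n → i + s ≠ l3 + r → G i = G (i + s) := by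
        intro i hin hiv
        have h1 : F (n - 1 - i) = F ((n - 1 - i) - s) := by
          apply HQ (n - 1 - i) (by omega) (by omega) (by omega)
        simp only [hG]
        rw [h1]
        congr 1
        omega
      have HB' : ∀ i, n ≤ i + s → i < n → G i = G (i - k) := by
        intro i hin hi
        have h1 : F (n - 1 - i) = F ((n - 1 - i) + k) := by
          apply HA (n - 1 - i) (by omega) (by omega) (by omega)
        simp only [hG]
        rw [h1]
        congr 1
        omega
      by_cases hdvd : s ∣ (k - 1)
      · refine rotation_contra G n r s k (l3 + r) (l3 + 2) hs1 hk0 (by omega) (by omega)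
          HA' HB' ?_ ?_ ?_
        · intro m hm
          obtain ⟨t, ht⟩ := hdvd
          have h1 : m * s + 1 = s * t + s := by omega
          have h2 : s ∣ s * t + s - m * s :=
            Nat.dvd_sub (dvd_add (dvd_mul_right s t) dvd_rfl) (dvd_mul_left s m)
          rw [show s * t + s - m * s = 1 by omega] at h2
          have := Nat.le_of_dvd one_pos h2
          omega
        · intro m hm
          omega
        · simp only [hG]
          rw [show n - 1 - (l3 + 2) = p by omega, show n - 1 - (l3 + 2 + r) = l2 by omega, b4, b1]
          simp
      · refine rotation_contra G n r s k (l3 + r) (l3 + 1) hs1 hk0 (by omega) (by omega)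
          HA' HB' ?_ ?_ ?_
        · intro m hm
          have hmk : m * s = k + s - 1 := by omega
          rcases m with - | m'
          · omega
          · have h1 : (m' + 1) * s = m' * s + s := by ring
            have h2 : m' * s = k - 1 := by omega
            exact hdvd (h2 ▸ dvd_mul_left s m')
        · intro m hm
          omega
        · simp only [hG]
          rw [show n - 1 - (l3 + 1) = p + 1 by omega, show n - 1 - (l3 + 1 + r) = l2 + 1 by omega,
            b5, b2]
          simp

private theorem base_vals (f w1 w2 w3 w4 : List Bool)
    (h1 : f = w2 ++ [true, false, true] ++ w3 ++ w4)
    (h2 : f = w1 ++ w2 ++ [false, true, false] ++ w3) :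
    w4.length = w1.length ∧
    f.length = w1.length + w2.length + 3 + w3.length ∧
    f.getD w2.length false = true ∧ f.getD (w2.length + 1) false = false ∧
    f.getD (w2.length + 2) false = true ∧
    f.getD (w1.length + w2.length) false = false ∧
    f.getD (w1.length + w2.length + 1) false = true ∧
    f.getD (w1.length + w2.length + 2) false = false := by
  have e1 : f = w2 ++ ([true, false, true] ++ (w3 ++ w4)) := by
    rw [h1]; simp
  have e2 : f = (w1 ++ w2) ++ ([false, true, false] ++ w3) := by
    rw [h2]; simp
  have hl1 := congrArg List.length e1
  have hl2 := congrArg List.length e2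
  simp at hl1 hl2
  have hP : (w1 ++ w2).length = w1.length + w2.length := by simp
  refine ⟨by omega, by omega, ?_, ?_, ?_, ?_, ?_, ?_⟩
  · conv_lhs => rw [e1]
    exact gp0 w2 (w3 ++ w4) _ _ _
  · conv_lhs => rw [e1]
    exact gp1 w2 (w3 ++ w4) _ _ _
  · conv_lhs => rw [e1]
    exact gp2 w2 (w3 ++ w4) _ _ _
  · conv_lhs => rw [e2, show w1.length + w2.length = (w1 ++ w2).length from hP.symm]
    exact gp0 (w1 ++ w2) w3 _ _ _
  · conv_lhs => rw [e2, show w1.length + w2.length + 1 = (w1 ++ w2).length + 1 by rw [hP]]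
    exact gp1 (w1 ++ w2) w3 _ _ _
  · conv_lhs => rw [e2, show w1.length + w2.length + 2 = (w1 ++ w2).length + 2 by rw [hP]]
    exact gp2 (w1 ++ w2) w3 _ _ _

private theorem alpha_free (f w1 w2 w3 w4 : List Bool)
    (h1 : f = w2 ++ [true, false, true] ++ w3 ++ w4)
    (h2 : f = w1 ++ w2 ++ [false, true, false] ++ w3) (hr : 0 < w1.length) :
    FFree f (w1 ++ w2 ++ [false, true, true] ++ w3 ++ w4) := by
  obtain ⟨hw4, hnlen, b1, b2, b3, b4, b5, b6⟩ := base_vals f w1 w2 w3 w4 h1 h2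
  set r := w1.length with hrdef
  set l2 := w2.length with hl2def
  set l3 := w3.length with hl3def
  set p := r + l2 with hpdef
  set n := f.length with hndef
  set A : List Bool := (w1 ++ w2) ++ ([false, true, true] ++ (w3 ++ w4)) with hA
  have hPlen : (w1 ++ w2).length = p := by simp [hpdef, hrdef, hl2def]
  have hAeq : w1 ++ w2 ++ [false, true, true] ++ w3 ++ w4 = A := by simp [hA]
  have hAlen : A.length = n + r := by simp [hA]; omega
  -- A agrees with f ++ w4 off p+2
  have hfw4 : f ++ w4 = (w1 ++ w2) ++ ([false, true, false] ++ (w3 ++ w4)) := by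
    rw [h2]; simp
  have fa : ∀ i, i < n → i ≠ p + 2 → A.getD i false = f.getD i false := by
    intro i hin hip
    have h3 : f.getD i false = (f ++ w4).getD i false := by
      rw [List.getD_append _ _ _ _ (by omega)]
    rw [h3, hfw4, hA]
    exact blocks_congr _ _ _ _ _ _ _ _ i (fun _ => rfl) (fun _ => rfl)
      (fun h => absurd (by omega : i = p + 2) hip)
  have fc : A.getD (p+2) false = true := by
    rw [hA, show p + 2 = (w1 ++ w2).length + 2 by rw [hPlen]]
    exact gp2 _ _ _ _ _
  -- A agrees with w1 ++ f off p, p+1 (for i ≥ r)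
  have hw1f : w1 ++ f = (w1 ++ w2) ++ ([true, false, true] ++ (w3 ++ w4)) := by
    rw [h1]; simp
  have fb : ∀ i, r ≤ i → i ≠ p → i ≠ p + 1 → A.getD i false = f.getD (i - r) false := by
    intro i hir hip hip1
    have hcg : A.getD i false = (w1 ++ f).getD i false := by
      rw [hw1f, hA]
      exact blocks_congr _ _ _ _ _ _ _ _ i (fun h => absurd (by omega : i = p) hip)
        (fun h => absurd (by omega : i = p + 1) hip1) (fun _ => rfl)
    rw [hcg]
    conv_lhs => rw [show i = w1.length + (i - r) by omega]
    exact getD_append_add w1 f (i - r)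
  -- suppose f occurs
  intro hinf
  obtain ⟨x, y, hxy⟩ := hinf
  set k := x.length with hk
  have hlen : k + n + y.length = n + r := by
    have ht := congrArg List.length hxy
    simp at ht
    omega
  have hkr : k ≤ r := by omega
  have occ : ∀ j, j < n → f.getD j false = A.getD (k + j) false := by
    intro j hj
    rw [← hAeq, ← hxy, show x ++ f ++ y = x ++ (f ++ y) by simp, getD_append_add,
      List.getD_append _ _ _ _ (by omega)]
  have hpn : p + 2 < n := by omega
  rcases Nat.eq_zero_or_pos k with hk0 | hk0
  · have := occ (p+2) hpn
    rw [hk0, Nat.zero_add, fc, b6] at this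
    exact Bool.noConfusion this
  rcases Nat.lt_or_ge k r with hklt | hkge
  · -- 0 < k < r : main case
    have HA : ∀ j, j + k < n → j + k ≠ p + 2 → f.getD j false = f.getD (j + k) false := by
      intro j hjk hjp
      rw [occ j (by omega), fa (k+j) (by omega) (by omega), show k + j = j + k by omega]
    have HB : ∀ j, n ≤ j + k → j < n → f.getD j false = f.getD (j - (r - k)) false := by
      intro j hjk hj
      rw [occ j hj, fb (k+j) (by omega) (by omega) (by omega),
        show k + j - r = j - (r - k) by omega]
    have O2 : f.getD (p + 2 - k) false = true := by
      rw [occ (p+2-k) (by omega), show k + (p + 2 - k) = p + 2 by omega, fc]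
    exact alpha_core (fun j => f.getD j false) r l2 l3 k p n rfl (by omega) hk0 hklt HA HB O2 b1 b2 b4 b5
  · -- k = r
    have hkeq : k = r := by omega
    have := occ l2 (by omega)
    rw [hkeq, show r + l2 = p from rfl, fa p (by omega) (by omega), b1, b4] at this
    exact Bool.noConfusion this

private theorem beta_free (f w1 w2 w3 w4 : List Bool)
    (h1 : f = w2 ++ [true, false, true] ++ w3 ++ w4)
    (h2 : f = w1 ++ w2 ++ [false, true, false] ++ w3) (hr : 0 < w1.length) :
    FFree f (w1 ++ w2 ++ [true, false, false] ++ w3 ++ w4) := by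
  obtain ⟨hw4, hnlen, b1, b2, b3, b4, b5, b6⟩ := base_vals f w1 w2 w3 w4 h1 h2
  set r := w1.length with hrdef
  set l2 := w2.length with hl2def
  set l3 := w3.length with hl3def
  set p := r + l2 with hpdef
  set n := f.length with hndef
  set A : List Bool := (w1 ++ w2) ++ ([true, false, false] ++ (w3 ++ w4)) with hA
  have hPlen : (w1 ++ w2).length = p := by simp [hpdef, hrdef, hl2def]
  have hAeq : w1 ++ w2 ++ [true, false, false] ++ w3 ++ w4 = A := by simp [hA]
  have hAlen : A.length = n + r := by simp [hA]; omega
  have hfw4 : f ++ w4 = (w1 ++ w2) ++ ([false, true, false] ++ (w3 ++ w4)) := by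
    rw [h2]; simp
  have fa : ∀ i, i < n → i ≠ p → i ≠ p + 1 → A.getD i false = f.getD i false := by
    intro i hin hip hip1
    have h3 : f.getD i false = (f ++ w4).getD i false := by
      rw [List.getD_append _ _ _ _ (by omega)]
    rw [h3, hfw4, hA]
    exact blocks_congr _ _ _ _ _ _ _ _ i (fun h => absurd (by omega : i = p) hip)
      (fun h => absurd (by omega : i = p + 1) hip1) (fun _ => rfl)
  have fc0 : A.getD p false = true := by
    rw [hA, show p = (w1 ++ w2).length by rw [hPlen]]
    exact gp0 _ _ _ _ _
  have fc1 : A.getD (p+1) false = false := by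
    rw [hA, show p + 1 = (w1 ++ w2).length + 1 by rw [hPlen]]
    exact gp1 _ _ _ _ _
  have hw1f : w1 ++ f = (w1 ++ w2) ++ ([true, false, true] ++ (w3 ++ w4)) := by
    rw [h1]; simp
  have fb : ∀ i, r ≤ i → i ≠ p + 2 → A.getD i false = f.getD (i - r) false := by
    intro i hir hip
    have hcg : A.getD i false = (w1 ++ f).getD i false := by
      rw [hw1f, hA]
      exact blocks_congr _ _ _ _ _ _ _ _ i (fun _ => rfl) (fun _ => rfl)
        (fun h => absurd (by omega : i = p + 2) hip)
    rw [hcg]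
    conv_lhs => rw [show i = w1.length + (i - r) by omega]
    exact getD_append_add w1 f (i - r)
  intro hinf
  obtain ⟨x, y, hxy⟩ := hinf
  set k := x.length with hk
  have hlen : k + n + y.length = n + r := by
    have ht := congrArg List.length hxy
    simp at ht
    omega
  have hkr : k ≤ r := by omega
  have occ : ∀ j, j < n → f.getD j false = A.getD (k + j) false := by
    intro j hj
    rw [← hAeq, ← hxy, show x ++ f ++ y = x ++ (f ++ y) by simp, getD_append_add,
      List.getD_append _ _ _ _ (by omega)]
  have hpn : p + 2 < n := by omega
  rcases Nat.eq_zero_or_pos k with hk0 | hk0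
  · have := occ p (by omega)
    rw [hk0, Nat.zero_add, fc0, b4] at this
    exact Bool.noConfusion this
  rcases Nat.lt_or_ge k r with hklt | hkge
  · -- 0 < k < r : main case
    have HA : ∀ j, j + k < n → j + k ≠ p → j + k ≠ p + 1 → f.getD j false = f.getD (j + k) false := by
      intro j hjk hjp hjp1
      rw [occ j (by omega), fa (k+j) (by omega) (by omega) (by omega),
        show k + j = j + k by omega]
    have HQ : ∀ j, r - k ≤ j → j < n → j ≠ p + 2 - k → f.getD j false = f.getD (j - (r - k)) false := by
      intro j hjk hj hjp
      rw [occ j hj, fb (k+j) (by omega) (by omega), show k + j - r = j - (r - k) by omega]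
    have d1 : f.getD (p + 1 - k) false = false := by
      rw [occ (p+1-k) (by omega), show k + (p + 1 - k) = p + 1 by omega, fc1]
    have d2 : f.getD (p + 2 - k) false = false := by
      rw [occ (p+2-k) (by omega), show k + (p + 2 - k) = p + 2 by omega,
        fa (p+2) (by omega) (by omega) (by omega)]
      exact b6
    exact beta_core (fun j => f.getD j false) r l2 l3 k p n rfl (by omega) hk0 hklt
      HA HQ d1 d2 b1 b2 b4 b5 b6
  · -- k = r
    have hkeq : k = r := by omega
    have := occ (l2+2) (by omega)
    rw [hkeq, show r + (l2 + 2) = p + 2 by omega,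
      fa (p+2) (by omega) (by omega) (by omega), b3, b6] at this
    exact Bool.noConfusion this

private theorem set_p0 (P T : List Bool) (x y z a : Bool) :
    (P ++ ([x, y, z] ++ T)).set P.length a = P ++ ([a, y, z] ++ T) := by
  have h := set_append_add P ([x, y, z] ++ T) 0 a
  simpa using h

private theorem set_p1 (P T : List Bool) (x y z a : Bool) :
    (P ++ ([x, y, z] ++ T)).set (P.length + 1) a = P ++ ([x, a, z] ++ T) := by
  have h := set_append_add P ([x, y, z] ++ T) 1 a
  simpa using h

private theorem set_p2 (P T : List Bool) (x y z a : Bool) :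
    (P ++ ([x, y, z] ++ T)).set (P.length + 2) a = P ++ ([x, y, a] ++ T) := by
  have h := set_append_add P ([x, y, z] ++ T) 2 a
  simpa using h

private theorem trans_part (f w1 w2 w3 w4 : List Bool)
    (h1 : f = w2 ++ [true, false, true] ++ w3 ++ w4)
    (h2 : f = w1 ++ w2 ++ [false, true, false] ++ w3) :
    tdist (w1 ++ w2 ++ [false, true, true] ++ w3 ++ w4)
        (w1 ++ w2 ++ [true, false, false] ++ w3 ++ w4) = 2 ∧
    ∀ ops : List TOp,
      MinimalTransf ops (w1 ++ w2 ++ [false, true, true] ++ w3 ++ w4)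
        (w1 ++ w2 ++ [true, false, false] ++ w3 ++ w4) →
      ¬ FreeTransf f ops (w1 ++ w2 ++ [false, true, true] ++ w3 ++ w4) := by
  set P : List Bool := w1 ++ w2 with hP
  set T : List Bool := w3 ++ w4 with hT
  set p : ℕ := P.length with hp
  have hAeq : w1 ++ w2 ++ [false, true, true] ++ w3 ++ w4 = P ++ ([false, true, true] ++ T) := by
    simp [hP, hT]
  have hBeq : w1 ++ w2 ++ [true, false, false] ++ w3 ++ w4 = P ++ ([true, false, false] ++ T) := by
    simp [hP, hT]
  rw [hAeq, hBeq]
  set A : List Bool := P ++ ([false, true, true] ++ T) with hA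
  set B : List Bool := P ++ ([true, false, false] ++ T) with hB
  set G1 : List Bool := P ++ ([true, false, true] ++ T) with hG1
  set G2 : List Bool := P ++ ([false, true, false] ++ T) with hG2
  have hALen : A.length = p + 3 + T.length := by simp [hA]; omega
  have hfG1 : f <:+: G1 := ⟨w1, [], by rw [hG1, h1]; simp [hP, hT]⟩
  have hfG2 : f <:+: G2 := ⟨[], w4, by rw [hG2, h2]; simp [hP, hT]⟩
  -- getD values
  have a0 : A.getD p false = false := gp0 P T _ _ _
  have a1 : A.getD (p+1) false = true := gp1 P T _ _ _
  have a2 : A.getD (p+2) false = true := gp2 P T _ _ _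
  have b0 : B.getD p false = true := gp0 P T _ _ _
  have b1 : B.getD (p+1) false = false := gp1 P T _ _ _
  have b2 : B.getD (p+2) false = false := gp2 P T _ _ _
  have g10 : G1.getD p false = true := gp0 P T _ _ _
  have g11 : G1.getD (p+1) false = false := gp1 P T _ _ _
  have g12 : G1.getD (p+2) false = true := gp2 P T _ _ _
  have g20 : G2.getD p false = false := gp0 P T _ _ _
  have g21 : G2.getD (p+1) false = true := gp1 P T _ _ _
  have g22 : G2.getD (p+2) false = false := gp2 P T _ _ _
  have dAB : ∀ q, q ≠ p → q ≠ p + 1 → q ≠ p + 2 → B.getD q false = A.getD q false := by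
    intro q hq0 hq1 hq2
    exact blocks_congr P T _ _ _ _ _ _ q (fun h => absurd h hq0) (fun h => absurd h hq1)
      (fun h => absurd h hq2)
  -- op computations
  have hSpA : (TOp.S p).apply A = G1 := by
    show (A.set p (A.getD (p+1) false)).set (p+1) (A.getD p false) = G1
    rw [a0, a1, hA, hG1, hp, set_p0, set_p1]
  have hRA : (TOp.R (p+2)).apply A = G2 := by
    show A.set (p+2) (!(A.getD (p+2) false)) = G2
    rw [a2, hA, hG2, hp, set_p2]
    norm_num
  have hRG1 : (TOp.R (p+2)).apply G1 = B := by
    show G1.set (p+2) (!(G1.getD (p+2) false)) = B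
    rw [g12, hG1, hB, hp, set_p2]
    norm_num
  have hSpG2 : (TOp.S p).apply G2 = B := by
    show (G2.set p (G2.getD (p+1) false)).set (p+1) (G2.getD p false) = B
    rw [g20, g21, hG2, hB, hp, set_p0, set_p1]
  have hG1len : G1.length = A.length := by simp [hG1, hA]
  have hG2len : G2.length = A.length := by simp [hG2, hA]
  -- the two canonical transformations
  have htr1 : Transforms [TOp.S p, TOp.R (p+2)] A B := by
    refine ⟨⟨?_, ?_, trivial⟩, ?_⟩
    · exact ⟨by omega, by rw [a0, a1]; simp⟩
    · rw [hSpA]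
      show p + 2 < G1.length
      omega
    · show applySeq _ A = B
      simp only [applySeq, hSpA, hRG1]
  -- tdist = 2
  have htd : tdist A B = 2 := by
    have hmem : 2 ∈ {n | ∃ ops : List TOp, ops.length = n ∧ Transforms ops A B} :=
      ⟨[TOp.S p, TOp.R (p+2)], rfl, htr1⟩
    refine le_antisymm (Nat.sInf_le hmem) (le_csInf ⟨2, hmem⟩ ?_)
    rintro m ⟨ops, hlen, hval, happ⟩
    rcases ops with _ | ⟨o, _ | ⟨o1, rest⟩⟩
    · exfalso
      have : A = B := happ
      have := congrArg (fun w => List.getD w p false) this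
      simp only [a0, b0] at this
      exact Bool.noConfusion this
    · exfalso
      have happ' : o.apply A = B := happ
      cases o with
      | R i =>
        by_cases hip : i = p
        · have : B.getD (p+1) false = A.getD (p+1) false := by
            rw [← happ']
            exact apply_not_mem _ _ _ (by simp [TOp.positions]; omega)
          rw [a1, b1] at this
          exact Bool.noConfusion this
        · have : B.getD p false = A.getD p false := by
            rw [← happ']
            exact apply_not_mem _ _ _ (by simp [TOp.positions]; omega)
          rw [a0, b0] at this
          exact Bool.noConfusion this
      | S i =>
        have hcase : (p ≠ i ∧ p ≠ i + 1) ∨ (p + 1 ≠ i ∧ p + 1 ≠ i + 1) ∨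
            (p + 2 ≠ i ∧ p + 2 ≠ i + 1) := by omega
        rcases hcase with ⟨u1, u2⟩ | ⟨u1, u2⟩ | ⟨u1, u2⟩
        · have : B.getD p false = A.getD p false := by
            rw [← happ']
            exact apply_not_mem _ _ _ (by simp [TOp.positions]; omega)
          rw [a0, b0] at this
          exact Bool.noConfusion this
        · have : B.getD (p+1) false = A.getD (p+1) false := by
            rw [← happ']
            exact apply_not_mem _ _ _ (by simp [TOp.positions]; omega)
          rw [a1, b1] at this
          exact Bool.noConfusion this
        · have : B.getD (p+2) false = A.getD (p+2) false := by
            rw [← happ']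
            exact apply_not_mem _ _ _ (by simp [TOp.positions]; omega)
          rw [a2, b2] at this
          exact Bool.noConfusion this
    · simp at hlen
      omega
  refine ⟨htd, ?_⟩
  -- classification of minimal transformations
  rintro ops ⟨⟨hval, happ⟩, hlen, honce⟩ hfree
  rw [htd] at hlen
  obtain ⟨o1, o2, rfl⟩ := List.length_eq_two.mp hlen
  have hv1 : o1.valid A := hval.1
  have hv2 : o2.valid (o1.apply A) := hval.2.1
  have happ2 : o2.apply (o1.apply A) = B := happ
  have hdisj : Disjoint o1.positions o2.positions := by
    have h : List.Pairwise (fun o o' => Disjoint o.positions o'.positions) [o1, o2] := honce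
    exact (List.pairwise_cons.mp h).1 o2 (by simp)
  have hmid : FFree f (o1.apply A) := by
    apply hfree
    simp [trajectory, List.scanl]
  -- membership facts
  have huntouched : ∀ q, q ∉ o1.positions → q ∉ o2.positions →
      B.getD q false = A.getD q false := by
    intro q hq1 hq2
    rw [← happ2, apply_not_mem _ _ _ hq2, apply_not_mem _ _ _ hq1]
  have htouch : ∀ q, (q ∈ o1.positions ∨ q ∈ o2.positions) →
      B.getD q false ≠ A.getD q false := by
    intro q hq
    rcases hq with hq | hq
    · have hq2 : q ∉ o2.positions := Finset.disjoint_left.mp hdisj hq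
      rw [← happ2, apply_not_mem _ _ _ hq2]
      exact apply_mem _ _ _ hv1 hq
    · have hq1 : q ∉ o1.positions := Finset.disjoint_right.mp hdisj hq
      rw [← happ2]
      have := apply_mem _ _ _ hv2 hq
      rw [apply_not_mem _ _ _ hq1] at this
      exact this
  have hmem : ∀ q, B.getD q false ≠ A.getD q false →
      (q ∈ o1.positions ∨ q ∈ o2.positions) := by
    intro q hq
    by_contra hcon
    push_neg at hcon
    exact hq (huntouched q hcon.1 hcon.2)
  have hsub : ∀ q, (q ∈ o1.positions ∨ q ∈ o2.positions) →
      (q = p ∨ q = p + 1 ∨ q = p + 2) := by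
    intro q hq
    by_contra hcon
    push_neg at hcon
    exact htouch q hq (dAB q hcon.1 hcon.2.1 hcon.2.2)
  have m0 : p ∈ o1.positions ∨ p ∈ o2.positions := hmem p (by rw [a0, b0]; simp)
  have m1 : p + 1 ∈ o1.positions ∨ p + 1 ∈ o2.positions := hmem _ (by rw [a1, b1]; simp)
  have m2 : p + 2 ∈ o1.positions ∨ p + 2 ∈ o2.positions := hmem _ (by rw [a2, b2]; simp)
  -- case analysis on op shapes
  cases o1 with
  | R i1 =>
    cases o2 with
    | R i2 =>
      simp [TOp.positions] at m0 m1 m2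
      omega
    | S i2 =>
      simp [TOp.positions] at m0 m1 m2
      have s1 : i1 = p ∨ i1 = p + 1 ∨ i1 = p + 2 := hsub i1 (by simp [TOp.positions])
      have s2 : i2 = p ∨ i2 = p + 1 ∨ i2 = p + 2 := hsub i2 (by simp [TOp.positions])
      have s3 : i2 + 1 = p ∨ i2 + 1 = p + 1 ∨ i2 + 1 = p + 2 :=
        hsub (i2+1) (by simp [TOp.positions])
      have hd : i1 ≠ i2 ∧ i1 ≠ i2 + 1 := by
        have h := Finset.disjoint_left.mp hdisj (show i1 ∈ (TOp.R i1).positions by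
          simp [TOp.positions])
        simp [TOp.positions] at h
        exact h
      have hcase : (i1 = p + 2 ∧ i2 = p) ∨ (i1 = p ∧ i2 = p + 1) := by omega
      rcases hcase with ⟨hi1, hi2⟩ | ⟨hi1, hi2⟩
      · subst hi1; subst hi2
        rw [hRA] at hmid
        exact hmid hfG2
      · subst hi1; subst hi2
        -- o2 = S (p+1) invalid on (R p).apply A
        obtain ⟨hv21, hv22⟩ := hv2
        apply hv22
        have e1 : ((TOp.R p).apply A).getD (p+1) false = A.getD (p+1) false :=
          apply_not_mem _ _ _ (by simp [TOp.positions])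
        have e2 : ((TOp.R p).apply A).getD (p+1+1) false = A.getD (p+2) false := by
          rw [show p+1+1 = p+2 from rfl]
          exact apply_not_mem _ _ _ (by simp [TOp.positions])
      
        rw [e1, e2, a1, a2]
  | S i1 =>
    cases o2 with
    | R i2 =>
      simp [TOp.positions] at m0 m1 m2
      have s1 : i1 = p ∨ i1 = p + 1 ∨ i1 = p + 2 := hsub i1 (by simp [TOp.positions])
      have s1' : i1 + 1 = p ∨ i1 + 1 = p + 1 ∨ i1 + 1 = p + 2 :=
        hsub (i1+1) (by simp [TOp.positions])
      have s2 : i2 = p ∨ i2 = p + 1 ∨ i2 = p + 2 := hsub i2 (by simp [TOp.positions])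
      have hd : i2 ≠ i1 ∧ i2 ≠ i1 + 1 := by
        have h := Finset.disjoint_right.mp hdisj (show i2 ∈ (TOp.R i2).positions by
          simp [TOp.positions])
        simp [TOp.positions] at h
        exact h
      have hcase : (i1 = p ∧ i2 = p + 2) ∨ (i1 = p + 1 ∧ i2 = p) := by omega
      rcases hcase with ⟨hi1, hi2⟩ | ⟨hi1, hi2⟩
      · subst hi1; subst hi2
        rw [hSpA] at hmid
        exact hmid hfG1
      · subst hi1
        -- o1 = S (p+1) invalid on A
        obtain ⟨hv11, hv12⟩ := hv1
        apply hv12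
        rw [show p+1+1 = p+2 from rfl, a1, a2]
    | S i2 =>
      simp [TOp.positions] at m0 m1 m2
      have s1 : i1 = p ∨ i1 = p + 1 ∨ i1 = p + 2 := hsub i1 (by simp [TOp.positions])
      have s1' : i1 + 1 = p ∨ i1 + 1 = p + 1 ∨ i1 + 1 = p + 2 :=
        hsub (i1+1) (by simp [TOp.positions])
      have s2 : i2 = p ∨ i2 = p + 1 ∨ i2 = p + 2 := hsub i2 (by simp [TOp.positions])
      have s2' : i2 + 1 = p ∨ i2 + 1 = p + 1 ∨ i2 + 1 = p + 2 :=
        hsub (i2+1) (by simp [TOp.positions])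
      have ha := Finset.disjoint_left.mp hdisj (show i1 ∈ (TOp.S i1).positions by
        simp [TOp.positions])
      have hb := Finset.disjoint_left.mp hdisj (show i1 + 1 ∈ (TOp.S i1).positions by
        simp [TOp.positions])
      simp [TOp.positions] at ha hb
      omega

end Aux

theorem stmt16 (f w1 w2 w3 w4 : List Bool)
    (h1 : f = w2 ++ [true, false, true] ++ w3 ++ w4)
    (h2 : f = w1 ++ w2 ++ [false, true, false] ++ w3) :
    ¬ TildeIsometric f ∧
    Witnesses f (w1 ++ w2 ++ [false, true, true] ++ w3 ++ w4)
                (w1 ++ w2 ++ [true, false, false] ++ w3 ++ w4) := by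
  obtain ⟨hw4, hnlen, b1, b2, b3, b4, b5, b6⟩ := base_vals f w1 w2 w3 w4 h1 h2
  rcases Nat.eq_zero_or_pos w1.length with hr0 | hr
  · exfalso
    rw [hr0, Nat.zero_add, b1] at b4
    exact Bool.noConfusion b4
  · have hAfree := alpha_free f w1 w2 w3 w4 h1 h2 hr
    have hBfree := beta_free f w1 w2 w3 w4 h1 h2 hr
    obtain ⟨htd, hclass⟩ := trans_part f w1 w2 w3 w4 h1 h2
    have hlen : (w1 ++ w2 ++ [false, true, true] ++ w3 ++ w4).length
        = (w1 ++ w2 ++ [true, false, false] ++ w3 ++ w4).length := by simp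
    have hflen : f.length < (w1 ++ w2 ++ [false, true, true] ++ w3 ++ w4).length := by
      have hL : (w1 ++ w2 ++ [false, true, true] ++ w3 ++ w4).length
          = w1.length + w2.length + 3 + w3.length + w4.length := by
        simp
        omega
      omega
    constructor
    · intro hiso
      obtain ⟨ops, hmin, hfree⟩ := hiso _ _ hlen hflen hAfree hBfree
      exact hclass ops hmin hfree
    · exact ⟨hlen, hAfree, hBfree, by rw [htd], hclass⟩
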